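/- Let X = Λ + C ∈ ℝ^{K×K}, where Λ = diag(a·𝟙_L, b·𝟙_{K−L}) with a, b > 0 and C is the block-constant matrix with blocks c₁₁J_{L,L}, c₁₂J_{L,K−L}, c₂₁J_{K−L,L}, c₂₂J_{K−L,K−L}. Let R_L ∈ ℝ^{L×(L−1)} and R_{K−L} ∈ ℝ^{(K−L)×(K−L−1)} be matrices whose columns form orthonormal bases of {x ∈ ℝ^L : xᵀ𝟙_L = 0} and {y ∈ ℝ^{K−L} : yᵀ𝟙_{K−L} = 0}, respectively. Let M be the 2×2 matrix with entries M₁₁ = a + Lc₁₁, M₁₂ = √(L(K−L))·c₁₂, M₂₁ = √(L(K−L))·c₂₁, M₂₂ = b + (K−L)c₂₂, and let M = Ũ·diag(s₁,s₂)·Ṽᵀ be a singular value decomposition of M with Ũ, Ṽ ∈ ℝ^{2×2} orthogonal and s₁, s₂ ≥ 0. Define e₁ = ((1/√L)𝟙_L ; 0_{K−L}), e₂ = (0_L ; (1/√(K−L))𝟙_{K−L}), v_i = Ṽ_{1i}e₁ + Ṽ_{2i}e₂ and u_i = Ũ_{1i}e₁ + Ũ_{2i}e₂ for i = 1, 2.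 Then the K×K matrices U = [ (R_L;0_{K−L,L−1}), (0_{L,K−L−1};R_{K−L}), u₁, u₂ ] and V = [ (R_L;0_{K−L,L−1}), (0_{L,K−L−1};R_{K−L}), v₁, v₂ ] are orthogonal, and X = U·Σ·Vᵀ with Σ = diag(a·𝟙_{L−1}, b·𝟙_{K−L−1}, s₁, s₂). -/
import Mathlib


noncomputable section

open Matrix Finset


lemma sum_split (K L : ℕ) (hLK : L ≤ K) (f : Fin K → ℝ) :
    ∑ i, f i = (∑ i : Fin L, f ⟨i, lt_of_lt_of_le i.isLt hLK⟩)
      + ∑ i : Fin (K - L), f ⟨L + i, by omega⟩ := by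
  set g : ℕ → ℝ := fun i => if h : i < K then f ⟨i, h⟩ else 0 with hg
  have h1 : ∑ i, f i = ∑ i ∈ range K, g i := by
    rw [← Fin.sum_univ_eq_sum_range g K]
    exact Finset.sum_congr rfl fun i _ => by simp [hg, i.isLt]
  have h2 : ∑ i ∈ range K, g i = ∑ i ∈ range L, g i + ∑ i ∈ range (K - L), g (L + i) := by
    conv_lhs => rw [show K = L + (K - L) by omega]
    exact Finset.sum_range_add g L (K - L)
  rw [h1, h2]
  congr 1
  · rw [← Fin.sum_univ_eq_sum_range g L]
    exact Finset.sum_congr rfl fun i _ => by simp [hg, lt_of_lt_of_le i.isLt hLK]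
  · rw [← Fin.sum_univ_eq_sum_range (fun i => g (L+i)) (K-L)]
    refine Finset.sum_congr rfl fun i _ => ?_
    have : L + (i:ℕ) < K := by omega
    simp [hg, this]


/-- The `K × K` matrix whose first `L-1` columns are `(R1 ; 0)`, next `K-L-1` columns are
`(0 ; R2)`, and last two columns are the vectors `w1`, `w2`. -/
def colBlocks (K L : ℕ) (hL1 : 1 ≤ L) (hLK : L + 1 ≤ K)
    (R1 : Matrix (Fin L) (Fin (L - 1)) ℝ) (R2 : Matrix (Fin (K - L)) (Fin (K - L - 1)) ℝ)
    (w1 w2 : Fin K → ℝ) : Matrix (Fin K) (Fin K) ℝ :=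
  Matrix.of fun i j =>
    if hj : (j : ℕ) < L - 1 then
      if hi : (i : ℕ) < L then R1 ⟨i, hi⟩ ⟨j, hj⟩ else 0
    else if hj2 : (j : ℕ) < K - 2 then
      if hi : (i : ℕ) < L then 0
      else R2 ⟨(i : ℕ) - L, by have := i.isLt; omega⟩ ⟨(j : ℕ) - (L - 1), by omega⟩
    else if (j : ℕ) = K - 2 then w1 i else w2 i


set_option maxHeartbeats 2000000 in
lemma colBlocks_orth (K L : ℕ) (hL1 : 1 ≤ L) (hLK : L + 1 ≤ K)
    (R1 : Matrix (Fin L) (Fin (L - 1)) ℝ) (R2 : Matrix (Fin (K - L)) (Fin (K - L - 1)) ℝ)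
    (hR1o : R1ᵀ * R1 = 1) (hR1s : ∀ j, ∑ i, R1 i j = 0)
    (hR2o : R2ᵀ * R2 = 1) (hR2s : ∀ j, ∑ i, R2 i j = 0)
    (w1 w2 : Fin K → ℝ) (c1 d1 c2 d2 : ℝ)
    (hw1 : ∀ i : Fin K, w1 i = if (i : ℕ) < L then c1 else d1)
    (hw2 : ∀ i : Fin K, w2 i = if (i : ℕ) < L then c2 else d2)
    (h11 : (L : ℝ) * (c1 * c1) + ((K : ℝ) - L) * (d1 * d1) = 1)
    (h12 : (L : ℝ) * (c1 * c2) + ((K : ℝ) - L) * (d1 * d2) = 0)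
    (h22 : (L : ℝ) * (c2 * c2) + ((K : ℝ) - L) * (d2 * d2) = 1) :
    (colBlocks K L hL1 hLK R1 R2 w1 w2)ᵀ * colBlocks K L hL1 hLK R1 R2 w1 w2 = 1 := by
  have hLK' : L ≤ K := by omega
  have hcast : ((K - L : ℕ) : ℝ) = (K : ℝ) - L := by push_cast [hLK']; ring
  -- dot product of an R1-block column with a w-vector is 0
  have dotAw : ∀ (jn : ℕ) (hj : jn < L - 1) (w : Fin K → ℝ) (c d : ℝ),
      (∀ i : Fin K, w i = if (i : ℕ) < L then c else d) →
      (∑ i : Fin K, (if hi : (i : ℕ) < L then R1 ⟨i, hi⟩ ⟨jn, hj⟩ else 0) * w i) = 0 := by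
    intro jn hj w c d hw
    rw [sum_split K L hLK']
    trans ((∑ i : Fin L, R1 i ⟨jn, hj⟩ * c) + ∑ _i : Fin (K - L), (0:ℝ))
    · congr 1
      · refine Finset.sum_congr rfl fun i _ => ?_
        rw [dif_pos i.isLt, hw, if_pos i.isLt]
      · refine Finset.sum_congr rfl fun i _ => ?_
        rw [dif_neg (by simp)]; ring
    · rw [← Finset.sum_mul, hR1s, zero_mul, Finset.sum_const_zero, add_zero]
  -- dot product of an R2-block column with a w-vector is 0
  have dotBw : ∀ (jn : ℕ) (hj1 : ¬ jn < L - 1) (hj2 : jn < K - 2) (w : Fin K → ℝ) (c d : ℝ),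
      (∀ i : Fin K, w i = if (i : ℕ) < L then c else d) →
      (∑ i : Fin K, (if hi : (i : ℕ) < L then 0
        else R2 ⟨(i : ℕ) - L, by have := i.isLt; omega⟩ ⟨jn - (L - 1), by omega⟩) * w i) = 0 := by
    intro jn hj1 hj2 w c d hw
    rw [sum_split K L hLK']
    trans ((∑ _i : Fin L, (0:ℝ)) + ∑ i : Fin (K - L), R2 i ⟨jn - (L - 1), by omega⟩ * d)
    · congr 1
      · refine Finset.sum_congr rfl fun i _ => ?_
        rw [dif_pos i.isLt]; ring
      · refine Finset.sum_congr rfl fun i _ => ?_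
        rw [dif_neg (by simp), hw, if_neg (by simp)]
        congr 1
        simp
    · rw [← Finset.sum_mul, hR2s, zero_mul, Finset.sum_const_zero, zero_add]
  -- dot product of two w-type vectors
  have dotww : ∀ (w w' : Fin K → ℝ) (c d c' d' : ℝ),
      (∀ i : Fin K, w i = if (i : ℕ) < L then c else d) →
      (∀ i : Fin K, w' i = if (i : ℕ) < L then c' else d') →
      (∑ i : Fin K, w i * w' i) = (L : ℝ) * (c * c') + ((K : ℝ) - L) * (d * d') := by
    intro w w' c d c' d' hw hw'
    rw [sum_split K L hLK']
    trans ((∑ _i : Fin L, c * c') + ∑ _i : Fin (K - L), d * d')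
    · congr 1
      · refine Finset.sum_congr rfl fun i _ => ?_
        rw [hw, hw', if_pos i.isLt, if_pos i.isLt]
      · refine Finset.sum_congr rfl fun i _ => ?_
        rw [hw, hw', if_neg (by simp), if_neg (by simp)]
    · rw [Finset.sum_const, Finset.sum_const, card_univ, card_univ, Fintype.card_fin,
        Fintype.card_fin, nsmul_eq_mul, nsmul_eq_mul, hcast]
  have dotwA : ∀ (jn : ℕ) (hj : jn < L - 1) (w : Fin K → ℝ) (c d : ℝ),
      (∀ i : Fin K, w i = if (i : ℕ) < L then c else d) →
      (∑ i : Fin K, w i * (if hi : (i : ℕ) < L then R1 ⟨i, hi⟩ ⟨jn, hj⟩ else 0)) = 0 := by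
    intro jn hj w c d hw
    exact Eq.trans (Finset.sum_congr rfl fun i _ => mul_comm _ _) (dotAw jn hj w c d hw)
  have dotwB : ∀ (jn : ℕ) (hj1 : ¬ jn < L - 1) (hj2 : jn < K - 2) (w : Fin K → ℝ) (c d : ℝ),
      (∀ i : Fin K, w i = if (i : ℕ) < L then c else d) →
      (∑ i : Fin K, w i * (if hi : (i : ℕ) < L then 0
        else R2 ⟨(i : ℕ) - L, by have := i.isLt; omega⟩ ⟨jn - (L - 1), by omega⟩)) = 0 := by
    intro jn hj1 hj2 w c d hw
    exact Eq.trans (Finset.sum_congr rfl fun i _ => mul_comm _ _) (dotBw jn hj1 hj2 w c d hw)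
  ext j k
  rw [Matrix.mul_apply]
  simp only [transpose_apply, colBlocks, of_apply]
  rcases Nat.lt_or_ge (j : ℕ) (L - 1) with hj | hj
  · simp only [dif_pos hj]
    rcases Nat.lt_or_ge (k : ℕ) (L - 1) with hk | hk
    · -- AA
      simp only [dif_pos hk]
      rw [sum_split K L hLK']
      trans ((∑ i : Fin L, R1 i ⟨j, hj⟩ * R1 i ⟨k, hk⟩) + ∑ _i : Fin (K - L), (0:ℝ))
      · congr 1
        · refine Finset.sum_congr rfl fun i _ => ?_
          rw [dif_pos i.isLt, dif_pos i.isLt]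
        · refine Finset.sum_congr rfl fun i _ => ?_
          rw [dif_neg (by simp)]; ring
      · rw [Finset.sum_const_zero, add_zero]
        have h := congrFun (congrFun hR1o ⟨j, hj⟩) ⟨k, hk⟩
        rw [Matrix.mul_apply] at h
        simp only [transpose_apply] at h
        rw [h]
        simp only [Matrix.one_apply]
        by_cases hjk : j = k
        · subst hjk; simp
        · have hv : ¬ (j:ℕ) = (k:ℕ) := fun h => hjk (Fin.ext h)
          simp [hjk, Fin.ext_iff, hv]
    · rcases Nat.lt_or_ge (k : ℕ) (K - 2) with hk2 | hk2
      · -- AB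
        simp only [dif_neg (by omega : ¬ (k : ℕ) < L - 1), dif_pos hk2]
        rw [Matrix.one_apply_ne (fun h => by subst h; omega)]
        refine Finset.sum_eq_zero fun i _ => ?_
        by_cases hi : (i : ℕ) < L
        · rw [dif_pos hi, dif_pos hi]; ring
        · rw [dif_neg hi, dif_neg hi]; ring
      · -- AC / AD
        simp only [dif_neg (by omega : ¬ (k : ℕ) < L - 1), dif_neg (by omega : ¬ (k : ℕ) < K - 2)]
        rw [Matrix.one_apply_ne (fun h => by subst h; omega)]
        by_cases hc : (k : ℕ) = K - 2
        · simp only [if_pos hc]; exact dotAw j hj w1 c1 d1 hw1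
        · simp only [if_neg hc]; exact dotAw j hj w2 c2 d2 hw2
  · rcases Nat.lt_or_ge (j : ℕ) (K - 2) with hj2 | hj2
    · simp only [dif_neg (by omega : ¬ (j : ℕ) < L - 1), dif_pos hj2]
      rcases Nat.lt_or_ge (k : ℕ) (L - 1) with hk | hk
      · -- BA
        simp only [dif_pos hk]
        rw [Matrix.one_apply_ne (fun h => by subst h; omega)]
        refine Finset.sum_eq_zero fun i _ => ?_
        by_cases hi : (i : ℕ) < L
        · rw [dif_pos hi, dif_pos hi]; ring
        · rw [dif_neg hi, dif_neg hi]; ring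
      · rcases Nat.lt_or_ge (k : ℕ) (K - 2) with hk2 | hk2
        · -- BB
          simp only [dif_neg (by omega : ¬ (k : ℕ) < L - 1), dif_pos hk2]
          rw [sum_split K L hLK']
          trans ((∑ _i : Fin L, (0:ℝ)) + ∑ i : Fin (K - L),
            R2 i ⟨(j : ℕ) - (L - 1), by omega⟩ * R2 i ⟨(k : ℕ) - (L - 1), by omega⟩)
          · congr 1
            · refine Finset.sum_congr rfl fun i _ => ?_
              rw [dif_pos i.isLt]; ring
            · refine Finset.sum_congr rfl fun i _ => ?_
              rw [dif_neg (by simp), dif_neg (by simp)]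
              congr 1 <;> simp
          · rw [Finset.sum_const_zero, zero_add]
            have h := congrFun (congrFun hR2o ⟨(j : ℕ) - (L - 1), by omega⟩) ⟨(k : ℕ) - (L - 1), by omega⟩
            rw [Matrix.mul_apply] at h
            simp only [transpose_apply] at h
            rw [h]
            simp only [Matrix.one_apply]
            by_cases hjk : j = k
            · subst hjk; simp
            · have hv : ¬ ((j:ℕ) - (L-1)) = ((k:ℕ) - (L-1)) := fun h => hjk (Fin.ext (by omega))
              simp [hjk, Fin.ext_iff, hv]
        · -- BC / BD
          simp only [dif_neg (by omega : ¬ (k : ℕ) < L - 1), dif_neg (by omega : ¬ (k : ℕ) < K - 2)]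
          rw [Matrix.one_apply_ne (fun h => by subst h; omega)]
          by_cases hc : (k : ℕ) = K - 2
          · simp only [if_pos hc]; exact dotBw j (by omega) hj2 w1 c1 d1 hw1
          · simp only [if_neg hc]; exact dotBw j (by omega) hj2 w2 c2 d2 hw2
    · simp only [dif_neg (by omega : ¬ (j : ℕ) < L - 1), dif_neg (by omega : ¬ (j : ℕ) < K - 2)]
      rcases Nat.lt_or_ge (k : ℕ) (L - 1) with hk | hk
      · -- CA / DA
        simp only [dif_pos hk]
        rw [Matrix.one_apply_ne (fun h => by subst h; omega)]
        by_cases hc : (j : ℕ) = K - 2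
        · simp only [if_pos hc]
          exact dotwA k hk w1 c1 d1 hw1
        · simp only [if_neg hc]
          exact dotwA k hk w2 c2 d2 hw2
      · rcases Nat.lt_or_ge (k : ℕ) (K - 2) with hk2 | hk2
        · -- CB / DB
          simp only [dif_neg (by omega : ¬ (k : ℕ) < L - 1), dif_pos hk2]
          rw [Matrix.one_apply_ne (fun h => by subst h; omega)]
          by_cases hc : (j : ℕ) = K - 2
          · simp only [if_pos hc]
            exact dotwB k (by omega) hk2 w1 c1 d1 hw1
          · simp only [if_neg hc]
            exact dotwB k (by omega) hk2 w2 c2 d2 hw2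
        · -- CC / CD / DC / DD
          simp only [dif_neg (by omega : ¬ (k : ℕ) < L - 1), dif_neg (by omega : ¬ (k : ℕ) < K - 2)]
          by_cases hcj : (j : ℕ) = K - 2 <;> by_cases hck : (k : ℕ) = K - 2
          · simp only [if_pos hcj, if_pos hck]
            rw [dotww w1 w1 c1 d1 c1 d1 hw1 hw1, h11,
              show j = k from Fin.ext (by omega), Matrix.one_apply_eq]
          · simp only [if_pos hcj, if_neg hck]
            rw [dotww w1 w2 c1 d1 c2 d2 hw1 hw2, h12,
              Matrix.one_apply_ne (fun h => by subst h; omega)]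
          · simp only [if_neg hcj, if_pos hck]
            rw [dotww w2 w1 c2 d2 c1 d1 hw2 hw1,
              Matrix.one_apply_ne (fun h => by subst h; omega)]
            linear_combination h12
          · simp only [if_neg hcj, if_neg hck]
            rw [dotww w2 w2 c2 d2 c2 d2 hw2 hw2, h22,
              show j = k from Fin.ext (by have := j.isLt; have := k.isLt; omega), Matrix.one_apply_eq]


set_option maxHeartbeats 2000000 in
/-- SVD of `X = diag(a𝟙_L, b𝟙_{K-L}) + blockConst(c₁₁, c₁₂, c₂₁, c₂₂)`:
the constructed `U` and `V` are orthogonal and `X = U Σ Vᵀ` with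
`Σ = diag(a𝟙_{L-1}, b𝟙_{K-L-1}, s₁, s₂)`. -/
theorem stmt8 (K L : ℕ) (hL1 : 1 ≤ L) (hLK : L + 1 ≤ K)
    (a b : ℝ) (ha : 0 < a) (hb : 0 < b) (c11 c12 c21 c22 : ℝ)
    (X : Matrix (Fin K) (Fin K) ℝ)
    (hX : X = Matrix.of fun i j : Fin K =>
      (if i = j then (if (i : ℕ) < L then a else b) else 0)
      + (if (i : ℕ) < L then (if (j : ℕ) < L then c11 else c12)
         else (if (j : ℕ) < L then c21 else c22)))
    (R1 : Matrix (Fin L) (Fin (L - 1)) ℝ) (R2 : Matrix (Fin (K - L)) (Fin (K - L - 1)) ℝ)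
    (hR1o : R1ᵀ * R1 = 1) (hR1s : ∀ j, ∑ i, R1 i j = 0)
    (hR2o : R2ᵀ * R2 = 1) (hR2s : ∀ j, ∑ i, R2 i j = 0)
    (M : Matrix (Fin 2) (Fin 2) ℝ)
    (hM : M = !![a + L * c11, Real.sqrt ((L : ℝ) * ((K : ℝ) - L)) * c12;
                 Real.sqrt ((L : ℝ) * ((K : ℝ) - L)) * c21, b + ((K : ℝ) - L) * c22])
    (Ut Vt : Matrix (Fin 2) (Fin 2) ℝ) (s1 s2 : ℝ) (hs1 : 0 ≤ s1) (hs2 : 0 ≤ s2)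
    (hUt : Utᵀ * Ut = 1) (hUt' : Ut * Utᵀ = 1) (hVt : Vtᵀ * Vt = 1) (hVt' : Vt * Vtᵀ = 1)
    (hMsvd : M = Ut * Matrix.diagonal ![s1, s2] * Vtᵀ)
    (e1 e2 : Fin K → ℝ)
    (he1 : e1 = fun i : Fin K => if (i : ℕ) < L then (Real.sqrt L)⁻¹ else 0)
    (he2 : e2 = fun i : Fin K => if (i : ℕ) < L then 0 else (Real.sqrt ((K : ℝ) - L))⁻¹)
    (u1 u2 v1 v2 : Fin K → ℝ)
    (hu1 : u1 = fun x => Ut 0 0 * e1 x + Ut 1 0 * e2 x)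
    (hu2 : u2 = fun x => Ut 0 1 * e1 x + Ut 1 1 * e2 x)
    (hv1 : v1 = fun x => Vt 0 0 * e1 x + Vt 1 0 * e2 x)
    (hv2 : v2 = fun x => Vt 0 1 * e1 x + Vt 1 1 * e2 x)
    (U V : Matrix (Fin K) (Fin K) ℝ)
    (hU : U = colBlocks K L hL1 hLK R1 R2 u1 u2)
    (hV : V = colBlocks K L hL1 hLK R1 R2 v1 v2)
    (S : Matrix (Fin K) (Fin K) ℝ)
    (hS : S = Matrix.diagonal fun j : Fin K =>
      if (j : ℕ) < L - 1 then a else if (j : ℕ) < K - 2 then b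
      else if (j : ℕ) = K - 2 then s1 else s2) :
    Uᵀ * U = 1 ∧ U * Uᵀ = 1 ∧ Vᵀ * V = 1 ∧ V * Vᵀ = 1 ∧ X = U * S * Vᵀ := by
  have hLK' : L ≤ K := by omega
  have hL0 : (0:ℝ) < L := by exact_mod_cast Nat.pos_of_ne_zero (by omega)
  have hKL0 : (0:ℝ) < (K:ℝ) - L := by
    have : ((L:ℝ) + 1) ≤ K := by exact_mod_cast hLK
    linarith
  have hsL : Real.sqrt L * Real.sqrt L = (L:ℝ) := Real.mul_self_sqrt hL0.le
  have hsKL : Real.sqrt ((K:ℝ)-L) * Real.sqrt ((K:ℝ)-L) = (K:ℝ)-L := Real.mul_self_sqrt hKL0.le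
  have hsLne : Real.sqrt L ≠ 0 := ne_of_gt (Real.sqrt_pos.mpr hL0)
  have hsKLne : Real.sqrt ((K:ℝ)-L) ≠ 0 := ne_of_gt (Real.sqrt_pos.mpr hKL0)
  -- w-form of the four special vectors
  have hwgen : ∀ (p q : ℝ) (i : Fin K),
      p * e1 i + q * e2 i = if (i:ℕ) < L then p * (Real.sqrt L)⁻¹ else q * (Real.sqrt ((K:ℝ)-L))⁻¹ := by
    intro p q i
    rw [he1, he2]
    by_cases h : (i:ℕ) < L <;> simp [h]
  have hwu1 : ∀ i : Fin K, u1 i = if (i:ℕ) < L then Ut 0 0 * (Real.sqrt L)⁻¹ else Ut 1 0 * (Real.sqrt ((K:ℝ)-L))⁻¹ :=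
    fun i => by rw [hu1]; exact hwgen _ _ i
  have hwu2 : ∀ i : Fin K, u2 i = if (i:ℕ) < L then Ut 0 1 * (Real.sqrt L)⁻¹ else Ut 1 1 * (Real.sqrt ((K:ℝ)-L))⁻¹ :=
    fun i => by rw [hu2]; exact hwgen _ _ i
  have hwv1 : ∀ i : Fin K, v1 i = if (i:ℕ) < L then Vt 0 0 * (Real.sqrt L)⁻¹ else Vt 1 0 * (Real.sqrt ((K:ℝ)-L))⁻¹ :=
    fun i => by rw [hv1]; exact hwgen _ _ i
  have hwv2 : ∀ i : Fin K, v2 i = if (i:ℕ) < L then Vt 0 1 * (Real.sqrt L)⁻¹ else Vt 1 1 * (Real.sqrt ((K:ℝ)-L))⁻¹ :=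
    fun i => by rw [hv2]; exact hwgen _ _ i
  have hkey : ∀ x y x' y' : ℝ,
      (L:ℝ) * ((x * (Real.sqrt L)⁻¹) * (x' * (Real.sqrt L)⁻¹))
        + ((K:ℝ)-L) * ((y * (Real.sqrt ((K:ℝ)-L))⁻¹) * (y' * (Real.sqrt ((K:ℝ)-L))⁻¹)) = x*x' + y*y' := by
    have base : ∀ (s t x x' : ℝ), s ≠ 0 → s * s = t → t * ((x * s⁻¹) * (x' * s⁻¹)) = x * x' := by
      intro s t x x' hs hst
      rw [← hst]
      field_simp
    intro x y x' y'
    rw [base _ _ x x' hsLne hsL, base _ _ y y' hsKLne hsKL]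
  have gram : ∀ (A : Matrix (Fin 2) (Fin 2) ℝ), Aᵀ * A = 1 → ∀ p r : Fin 2,
      A 0 p * A 0 r + A 1 p * A 1 r = if p = r then 1 else 0 := by
    intro A hA p r
    have h := congrFun (congrFun hA p) r
    rw [Matrix.mul_apply, Fin.sum_univ_two] at h
    simpa [Matrix.one_apply] using h
  have hUU : Uᵀ * U = 1 := by
    rw [hU]
    refine colBlocks_orth K L hL1 hLK R1 R2 hR1o hR1s hR2o hR2s u1 u2 _ _ _ _ hwu1 hwu2 ?_ ?_ ?_
    · rw [hkey]; simpa using gram Ut hUt 0 0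
    · rw [hkey]; simpa using gram Ut hUt 0 1
    · rw [hkey]; simpa using gram Ut hUt 1 1
  have hVV : Vᵀ * V = 1 := by
    rw [hV]
    refine colBlocks_orth K L hL1 hLK R1 R2 hR1o hR1s hR2o hR2s v1 v2 _ _ _ _ hwv1 hwv2 ?_ ?_ ?_
    · rw [hkey]; simpa using gram Vt hVt 0 0
    · rw [hkey]; simpa using gram Vt hVt 0 1
    · rw [hkey]; simpa using gram Vt hVt 1 1
  have hUU' : U * Uᵀ = 1 := mul_eq_one_comm.mp hUU
  have hVV' : V * Vᵀ = 1 := mul_eq_one_comm.mp hVV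
  -- delta sums
  have deltaA : ∀ (i : Fin K) (hi : (i:ℕ) < L) (t : ℝ) (f : Fin L → ℝ),
      (∑ k : Fin L, (if i = (⟨(k:ℕ), lt_of_lt_of_le k.isLt hLK'⟩ : Fin K) then t else 0) * f k)
        = t * f ⟨(i:ℕ), hi⟩ := by
    intro i hi t f
    trans (∑ k : Fin L, if (⟨(i:ℕ), hi⟩ : Fin L) = k then t * f k else 0)
    · refine Finset.sum_congr rfl fun k _ => ?_
      by_cases h : (⟨(i:ℕ), hi⟩ : Fin L) = k
      · have hv : (i:ℕ) = (k:ℕ) := congrArg Fin.val h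
        have h2 : i = (⟨(k:ℕ), lt_of_lt_of_le k.isLt hLK'⟩ : Fin K) := Fin.ext hv
        rw [if_pos h2, if_pos h]
      · have h2 : ¬ i = (⟨(k:ℕ), lt_of_lt_of_le k.isLt hLK'⟩ : Fin K) := by
          intro hh
          have hv : (i:ℕ) = (k:ℕ) := congrArg Fin.val hh
          exact h (Fin.ext (show (i:ℕ) = (k:ℕ) from hv))
        rw [if_neg h2, if_neg h, zero_mul]
    · rw [Finset.sum_ite_eq]
      simp
  have deltaB : ∀ (i : Fin K) (hi : ¬ (i:ℕ) < L) (t : ℝ) (f : Fin (K-L) → ℝ),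
      (∑ k : Fin (K-L), (if i = (⟨L + (k:ℕ), by omega⟩ : Fin K) then t else 0) * f k)
        = t * f ⟨(i:ℕ) - L, by have := i.isLt; omega⟩ := by
    intro i hi t f
    trans (∑ k : Fin (K-L), if (⟨(i:ℕ) - L, by have := i.isLt; omega⟩ : Fin (K-L)) = k then t * f k else 0)
    · refine Finset.sum_congr rfl fun k _ => ?_
      by_cases h : (⟨(i:ℕ) - L, by have := i.isLt; omega⟩ : Fin (K-L)) = k
      · have hv : (i:ℕ) - L = (k:ℕ) := congrArg Fin.val h
        have h2 : i = (⟨L + (k:ℕ), by omega⟩ : Fin K) := Fin.ext (by omega : (i:ℕ) = L + (k:ℕ))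
        rw [if_pos h2, if_pos h]
      · have h2 : ¬ i = (⟨L + (k:ℕ), by omega⟩ : Fin K) := by
          intro hh
          have hv : (i:ℕ) = L + (k:ℕ) := congrArg Fin.val hh
          exact h (Fin.ext (show (i:ℕ) - L = (k:ℕ) by omega))
        rw [if_neg h2, if_neg h, zero_mul]
    · rw [Finset.sum_ite_eq]
      simp
  -- constant sums
  have hcast : ((K - L : ℕ) : ℝ) = (K : ℝ) - L := by push_cast [hLK']; ring
  have sumconstL : ∀ c : ℝ, (∑ _k : Fin L, c) = (L:ℝ) * c := by
    intro c
    rw [Finset.sum_const, Finset.card_univ, Fintype.card_fin, nsmul_eq_mul]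
  have sumconstKL : ∀ c : ℝ, (∑ _k : Fin (K-L), c) = ((K:ℝ) - L) * c := by
    intro c
    rw [Finset.sum_const, Finset.card_univ, Fintype.card_fin, nsmul_eq_mul, hcast]
  have hinvL : Real.sqrt (L:ℝ) * (Real.sqrt (L:ℝ))⁻¹ = 1 := mul_inv_cancel₀ hsLne
  have hinvKL : Real.sqrt ((K:ℝ)-L) * (Real.sqrt ((K:ℝ)-L))⁻¹ = 1 := mul_inv_cancel₀ hsKLne
  have idA : ∀ c : ℝ, (L:ℝ) * (c * (Real.sqrt (L:ℝ))⁻¹)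
      = Real.sqrt (L:ℝ) * Real.sqrt ((K:ℝ)-L) * c * (Real.sqrt ((K:ℝ)-L))⁻¹ := by
    intro c
    linear_combination (-(c * (Real.sqrt (L:ℝ))⁻¹)) * hsL
      + (Real.sqrt (L:ℝ) * c) * hinvL - (Real.sqrt (L:ℝ) * c) * hinvKL
  have idB : ∀ c : ℝ, ((K:ℝ)-L) * (c * (Real.sqrt ((K:ℝ)-L))⁻¹)
      = Real.sqrt (L:ℝ) * Real.sqrt ((K:ℝ)-L) * c * (Real.sqrt (L:ℝ))⁻¹ := by
    intro c
    linear_combination (-(c * (Real.sqrt ((K:ℝ)-L))⁻¹)) * hsKL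
      + (Real.sqrt ((K:ℝ)-L) * c) * hinvKL - (Real.sqrt ((K:ℝ)-L) * c) * hinvL
  -- action of X on e1 and e2
  have hXe1 : ∀ i : Fin K, (∑ k : Fin K, X i k * e1 k) = M 0 0 * e1 i + M 1 0 * e2 i := by
    intro i
    by_cases hi : (i:ℕ) < L
    · rw [sum_split K L hLK']
      trans ((∑ k : Fin L, ((if i = (⟨(k:ℕ), lt_of_lt_of_le k.isLt hLK'⟩ : Fin K) then a else 0)
          * (Real.sqrt (L:ℝ))⁻¹ + c11 * (Real.sqrt (L:ℝ))⁻¹)) + ∑ _k : Fin (K-L), (0:ℝ))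
      · congr 1
        · refine Finset.sum_congr rfl fun k _ => ?_
          rw [hX, he1]
          simp [hi, k.isLt, add_mul]
        · refine Finset.sum_congr rfl fun k _ => ?_
          rw [he1]
          simp
      · rw [Finset.sum_add_distrib, deltaA i hi a (fun _ => (Real.sqrt (L:ℝ))⁻¹), sumconstL,
          Finset.sum_const_zero, add_zero, hM, he1, he2]
        simp [hi]
        ring
    · rw [sum_split K L hLK']
      trans ((∑ _k : Fin L, c21 * (Real.sqrt (L:ℝ))⁻¹) + ∑ _k : Fin (K-L), (0:ℝ))
      · congr 1
        · refine Finset.sum_congr rfl fun k _ => ?_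
          rw [hX, he1]
          have hne : ¬ i = (⟨(k:ℕ), lt_of_lt_of_le k.isLt hLK'⟩ : Fin K) := by
            intro hh
            have hv : (i:ℕ) = (k:ℕ) := congrArg Fin.val hh
            have := k.isLt
            omega
          simp [hi, hne, k.isLt]
        · refine Finset.sum_congr rfl fun k _ => ?_
          rw [he1]
          simp
      · rw [sumconstL, Finset.sum_const_zero, add_zero, hM, he1, he2]
        simp [hi]
        linear_combination idA c21
  have hXe2 : ∀ i : Fin K, (∑ k : Fin K, X i k * e2 k) = M 0 1 * e1 i + M 1 1 * e2 i := by
    intro i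
    by_cases hi : (i:ℕ) < L
    · rw [sum_split K L hLK']
      trans ((∑ _k : Fin L, (0:ℝ)) + ∑ _k : Fin (K-L), c12 * (Real.sqrt ((K:ℝ)-L))⁻¹)
      · congr 1
        · refine Finset.sum_congr rfl fun k _ => ?_
          rw [he2]
          simp [k.isLt]
        · refine Finset.sum_congr rfl fun k _ => ?_
          rw [hX, he2]
          have hne : ¬ i = (⟨L + (k:ℕ), by omega⟩ : Fin K) := by
            intro hh
            have hv : (i:ℕ) = L + (k:ℕ) := congrArg Fin.val hh
            omega
          simp [hi, hne]
      · rw [sumconstKL, Finset.sum_const_zero, zero_add, hM, he1, he2]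
        simp [hi]
        linear_combination idB c12
    · rw [sum_split K L hLK']
      trans ((∑ _k : Fin L, (0:ℝ)) + ∑ k : Fin (K-L),
          ((if i = (⟨L + (k:ℕ), by omega⟩ : Fin K) then b else 0) * (Real.sqrt ((K:ℝ)-L))⁻¹
            + c22 * (Real.sqrt ((K:ℝ)-L))⁻¹))
      · congr 1
        · refine Finset.sum_congr rfl fun k _ => ?_
          rw [he2]
          simp [k.isLt]
        · refine Finset.sum_congr rfl fun k _ => ?_
          rw [hX, he2]
          simp [hi, add_mul]
      · rw [Finset.sum_add_distrib, deltaB i hi b (fun _ => (Real.sqrt ((K:ℝ)-L))⁻¹), sumconstKL,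
          Finset.sum_const_zero, zero_add, hM, he1, he2]
        simp [hi]
        ring
  -- M * Vt = Ut * diag(s1,s2)
  have hMV : M * Vt = Ut * Matrix.diagonal ![s1, s2] := by
    rw [hMsvd, Matrix.mul_assoc (Ut * Matrix.diagonal ![s1, s2]) Vtᵀ Vt, hVt, Matrix.mul_one]
  have hMV00 : M 0 0 * Vt 0 0 + M 0 1 * Vt 1 0 = Ut 0 0 * s1 := by
    have h := congrFun (congrFun hMV 0) 0
    rw [Matrix.mul_apply, Fin.sum_univ_two, Matrix.mul_diagonal] at h
    simpa using h
  have hMV10 : M 1 0 * Vt 0 0 + M 1 1 * Vt 1 0 = Ut 1 0 * s1 := by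
    have h := congrFun (congrFun hMV 1) 0
    rw [Matrix.mul_apply, Fin.sum_univ_two, Matrix.mul_diagonal] at h
    simpa using h
  have hMV01 : M 0 0 * Vt 0 1 + M 0 1 * Vt 1 1 = Ut 0 1 * s2 := by
    have h := congrFun (congrFun hMV 0) 1
    rw [Matrix.mul_apply, Fin.sum_univ_two, Matrix.mul_diagonal] at h
    simpa using h
  have hMV11 : M 1 0 * Vt 0 1 + M 1 1 * Vt 1 1 = Ut 1 1 * s2 := by
    have h := congrFun (congrFun hMV 1) 1
    rw [Matrix.mul_apply, Fin.sum_univ_two, Matrix.mul_diagonal] at h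
    simpa using h
  have hXv1 : ∀ i : Fin K, (∑ k : Fin K, X i k * v1 k) = u1 i * s1 := by
    intro i
    trans (Vt 0 0 * (∑ k : Fin K, X i k * e1 k) + Vt 1 0 * (∑ k : Fin K, X i k * e2 k))
    · rw [Finset.mul_sum, Finset.mul_sum, ← Finset.sum_add_distrib]
      refine Finset.sum_congr rfl fun k _ => ?_
      rw [hv1]
      ring
    · rw [hXe1 i, hXe2 i, hu1]
      linear_combination e1 i * hMV00 + e2 i * hMV10
  have hXv2 : ∀ i : Fin K, (∑ k : Fin K, X i k * v2 k) = u2 i * s2 := by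
    intro i
    trans (Vt 0 1 * (∑ k : Fin K, X i k * e1 k) + Vt 1 1 * (∑ k : Fin K, X i k * e2 k))
    · rw [Finset.mul_sum, Finset.mul_sum, ← Finset.sum_add_distrib]
      refine Finset.sum_congr rfl fun k _ => ?_
      rw [hv2]
      ring
    · rw [hXe1 i, hXe2 i, hu2]
      linear_combination e1 i * hMV01 + e2 i * hMV11
  have hXV : X * V = U * S := by
    ext i j
    rw [Matrix.mul_apply, hS, Matrix.mul_diagonal]
    simp only [hU, hV, colBlocks, of_apply]
    rcases Nat.lt_or_ge (j:ℕ) (L-1) with hj | hj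
    · simp only [dif_pos hj, if_pos hj]
      by_cases hi : (i:ℕ) < L
      · rw [dif_pos hi, sum_split K L hLK']
        trans ((∑ k : Fin L, ((if i = (⟨(k:ℕ), lt_of_lt_of_le k.isLt hLK'⟩ : Fin K) then a else 0)
            * R1 k ⟨(j:ℕ), hj⟩ + c11 * R1 k ⟨(j:ℕ), hj⟩)) + ∑ _k : Fin (K-L), (0:ℝ))
        · congr 1
          · refine Finset.sum_congr rfl fun k _ => ?_
            rw [hX]
            simp [hi, k.isLt, add_mul]
          · refine Finset.sum_congr rfl fun k _ => ?_
            rw [dif_neg (by simp), mul_zero]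
        · rw [Finset.sum_add_distrib, deltaA i hi a (fun k => R1 k ⟨(j:ℕ), hj⟩),
            ← Finset.mul_sum, hR1s, mul_zero, add_zero, Finset.sum_const_zero, add_zero, mul_comm]
      · rw [dif_neg hi, sum_split K L hLK']
        trans ((∑ k : Fin L, c21 * R1 k ⟨(j:ℕ), hj⟩) + ∑ _k : Fin (K-L), (0:ℝ))
        · congr 1
          · refine Finset.sum_congr rfl fun k _ => ?_
            rw [hX]
            have hne : ¬ i = (⟨(k:ℕ), lt_of_lt_of_le k.isLt hLK'⟩ : Fin K) := by
              intro hh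
              have hv : (i:ℕ) = (k:ℕ) := congrArg Fin.val hh
              have := k.isLt
              omega
            simp [hi, hne, k.isLt]
          · refine Finset.sum_congr rfl fun k _ => ?_
            rw [dif_neg (by simp), mul_zero]
        · rw [← Finset.mul_sum, hR1s, mul_zero, Finset.sum_const_zero, add_zero, zero_mul]
    · rcases Nat.lt_or_ge (j:ℕ) (K-2) with hj2 | hj2
      · simp only [dif_neg (by omega : ¬ (j:ℕ) < L - 1), dif_pos hj2,
          if_neg (by omega : ¬ (j:ℕ) < L - 1), if_pos hj2]
        by_cases hi : (i:ℕ) < L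
        · rw [dif_pos hi, sum_split K L hLK']
          trans ((∑ _k : Fin L, (0:ℝ)) + ∑ k : Fin (K-L), c12 * R2 k ⟨(j:ℕ) - (L-1), by omega⟩)
          · congr 1
            · refine Finset.sum_congr rfl fun k _ => ?_
              rw [dif_pos (show ((⟨(k:ℕ), lt_of_lt_of_le k.isLt hLK'⟩ : Fin K) : ℕ) < L from k.isLt), mul_zero]
            · refine Finset.sum_congr rfl fun k _ => ?_
              rw [hX, dif_neg (by simp)]
              have hne : ¬ i = (⟨L + (k:ℕ), by omega⟩ : Fin K) := by
                intro hh
                have hv : (i:ℕ) = L + (k:ℕ) := congrArg Fin.val hh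
                omega
              simp [hi, hne]
          · rw [Finset.sum_const_zero, zero_add, ← Finset.mul_sum, hR2s, mul_zero, zero_mul]
        · rw [dif_neg hi, sum_split K L hLK']
          trans ((∑ _k : Fin L, (0:ℝ)) + ∑ k : Fin (K-L),
              ((if i = (⟨L + (k:ℕ), by omega⟩ : Fin K) then b else 0) * R2 k ⟨(j:ℕ) - (L-1), by omega⟩
                + c22 * R2 k ⟨(j:ℕ) - (L-1), by omega⟩))
          · congr 1
            · refine Finset.sum_congr rfl fun k _ => ?_
              rw [dif_pos (show ((⟨(k:ℕ), lt_of_lt_of_le k.isLt hLK'⟩ : Fin K) : ℕ) < L from k.isLt), mul_zero]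
            · refine Finset.sum_congr rfl fun k _ => ?_
              rw [hX, dif_neg (by simp)]
              simp [hi, add_mul]
          · rw [Finset.sum_add_distrib, deltaB i hi b (fun k => R2 k ⟨(j:ℕ) - (L-1), by omega⟩),
              ← Finset.mul_sum, hR2s, mul_zero, add_zero, Finset.sum_const_zero, zero_add, mul_comm]
      · simp only [dif_neg (by omega : ¬ (j:ℕ) < L - 1), dif_neg (by omega : ¬ (j:ℕ) < K - 2),
          if_neg (by omega : ¬ (j:ℕ) < L - 1), if_neg (by omega : ¬ (j:ℕ) < K - 2)]
        by_cases hc : (j:ℕ) = K - 2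
        · simp only [if_pos hc]
          exact hXv1 i
        · simp only [if_neg hc]
          exact hXv2 i
  refine ⟨hUU, hUU', hVV, hVV', ?_⟩
  calc X = X * (V * Vᵀ) := by rw [hVV', Matrix.mul_one]
    _ = (X * V) * Vᵀ := by rw [Matrix.mul_assoc]
    _ = U * S * Vᵀ := by rw [hXV]

end
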